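/- Let R be a commutative Bézout domain, n a positive integer, and A ∈ Mₙ(R). Suppose there exists a nonzero row vector u ∈ Rⁿ with u·A = 0. Then there exists an invertible matrix P ∈ GLₙ(R) such that the last row of P·A·P⁻¹ is zero. -/

import Mathlib

section Aux

variable {R : Type*} [CommRing R]

lemma bezout_gcd_aux [IsDomain R] [IsBezout R] (a b : R) :
    ∃ g p q x y : R, a = g * p ∧ b = g * q ∧ x * p + y * q = 1 := by
  classical
  by_cases hg : IsBezout.gcd a b = 0
  · have ha : a = 0 := by
      obtain ⟨p, hp⟩ := IsBezout.gcd_dvd_left a b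
      rw [hp, hg, zero_mul]
    have hb : b = 0 := by
      obtain ⟨q, hq⟩ := IsBezout.gcd_dvd_right a b
      rw [hq, hg, zero_mul]
    exact ⟨0, 1, 0, 1, 0, by simp [ha], by simp [hb], by ring⟩
  · obtain ⟨p, hp⟩ := IsBezout.gcd_dvd_left a b
    obtain ⟨q, hq⟩ := IsBezout.gcd_dvd_right a b
    obtain ⟨x, y, hxy⟩ := IsBezout.gcd_eq_sum a b
    refine ⟨IsBezout.gcd a b, p, q, x, y, hp, hq, ?_⟩
    have key : IsBezout.gcd a b * (x * p + y * q) = IsBezout.gcd a b * 1 := by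
      linear_combination hxy - x * hp - y * hq
    exact mul_left_cancel₀ hg key

lemma sum_two_supp {N : ℕ} {i L : Fin N} (h : i ≠ L) (g : Fin N → R)
    (hg : ∀ m, m ≠ i → m ≠ L → g m = 0) : ∑ m, g m = g i + g L := by
  classical
  rw [← Finset.sum_pair h]
  exact (Finset.sum_subset (Finset.subset_univ _) (by
    intro m _ hm
    simp only [Finset.mem_insert, Finset.mem_singleton, not_or] at hm
    exact hg m hm.1 hm.2)).symm

/-- Identity matrix modified at rows/cols `i, L` with a 2×2 block. -/
def emb {N : ℕ} (i L : Fin N) (a b c d : R) : Matrix (Fin N) (Fin N) R :=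
  Matrix.of fun k l =>
    if k = i then (if l = i then a else if l = L then b else 0)
    else if k = L then (if l = i then c else if l = L then d else 0)
    else if l = k then 1 else 0

lemma emb_mul {N : ℕ} {i L : Fin N} (h : i ≠ L) (a b c d a' b' c' d' : R) :
    emb i L a b c d * emb i L a' b' c' d' =
      emb i L (a * a' + b * c') (a * b' + b * d') (c * a' + d * c') (c * b' + d * d') := by
  classical
  ext k l
  simp only [Matrix.mul_apply, emb, Matrix.of_apply]
  rcases eq_or_ne k i with rfl | hki
  · rw [sum_two_supp h (fun m => _) (fun m hmi hmL => by simp [hmi, hmL])]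
    simp [h, Ne.symm h]
    split_ifs <;> ring
  · rcases eq_or_ne k L with rfl | hkL
    · rw [sum_two_supp h (fun m => _) (fun m hmi hmL => by simp [hmi, hmL, h, Ne.symm h, hki])]
      simp [h, Ne.symm h, hki]
      split_ifs <;> ring
    · rw [Fintype.sum_eq_single k (fun m hm => by simp [hki, hkL, hm, Ne.symm hm])]
      simp [hki, hkL]

lemma emb_one {N : ℕ} {i L : Fin N} (h : i ≠ L) :
    emb i L (1 : R) 0 0 1 = 1 := by
  ext k l
  simp only [emb, Matrix.of_apply, Matrix.one_apply]
  split_ifs <;> first | rfl | grind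

lemma vecMul_emb {N : ℕ} {i L : Fin N} (h : i ≠ L) (v : Fin N → R) (a b c d : R) (l : Fin N) :
    Matrix.vecMul v (emb i L a b c d) l =
      if l = i then v i * a + v L * c
      else if l = L then v i * b + v L * d
      else v l := by
  classical
  simp only [Matrix.vecMul, dotProduct, emb, Matrix.of_apply]
  rcases eq_or_ne l i with rfl | hli
  · rw [sum_two_supp h (fun m => _) (fun m hmi hmL => by simp [hmi, hmL, Ne.symm hmi])]
    simp [h, Ne.symm h]
  · rcases eq_or_ne l L with rfl | hlL
    · rw [sum_two_supp h (fun m => _) (fun m hmi hmL => by simp [hmi, hmL, Ne.symm hmL])]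
      simp [h, Ne.symm h, hli]
    · rw [Fintype.sum_eq_single l (fun m hm => by
        rcases eq_or_ne m i with rfl | hmi
        · simp [hli, hlL]
        · rcases eq_or_ne m L with rfl | hmL
          · simp [hli, hlL, hmi]
          · simp [hmi, hmL, Ne.symm hm])]
      simp [hli, hlL]

/-- The key reduction: over a Bézout domain one can transform a row vector by an
invertible matrix so that only entries with index `< N - j` or the last entry survive. -/
lemma bezout_reduce (R : Type*) [CommRing R] [IsDomain R] [IsBezout R] (N : ℕ) (j : ℕ)
    (v : Fin (N + 1) → R) :
    ∃ M Minv : Matrix (Fin (N + 1)) (Fin (N + 1)) R, M * Minv = 1 ∧ Minv * M = 1 ∧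
      ∀ l : Fin (N + 1), l ≠ Fin.last N → N - j ≤ (l : ℕ) → Matrix.vecMul v M l = 0 := by
  classical
  induction j with
  | zero =>
    refine ⟨1, 1, by simp, by simp, fun l hl hle => absurd ?_ hl⟩
    have hlN : (l : ℕ) ≤ N := Nat.lt_succ_iff.mp l.isLt
    exact Fin.ext (by omega : (l : ℕ) = N)
  | succ j ih =>
    obtain ⟨M', Minv', h1, h2, hz⟩ := ih
    by_cases hjN : N ≤ j
    · exact ⟨M', Minv', h1, h2, fun l hl hle => hz l hl (by omega)⟩
    · set k : Fin (N + 1) := ⟨N - (j + 1), by omega⟩ with hk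
      have hkl : k ≠ Fin.last N := by
        refine Fin.ne_of_val_ne ?_
        simp only [hk, Fin.val_last]
        omega
      set w : Fin (N + 1) → R := Matrix.vecMul v M' with hw
      obtain ⟨g, p, q, x, y, hp, hq, hxy⟩ := bezout_gcd_aux (w k) (w (Fin.last N))
      set E : Matrix (Fin (N + 1)) (Fin (N + 1)) R := emb k (Fin.last N) (-q) x p y with hE
      set Einv : Matrix (Fin (N + 1)) (Fin (N + 1)) R := emb k (Fin.last N) (-y) x p q with hEinv
      have hEE : E * Einv = 1 := by
        rw [hE, hEinv, emb_mul hkl,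
          show -q * -y + x * p = (1 : R) by linear_combination hxy,
          show -q * x + x * q = (0 : R) by ring,
          show p * -y + y * p = (0 : R) by ring,
          show p * x + y * q = (1 : R) by linear_combination hxy,
          emb_one hkl]
      have hEE' : Einv * E = 1 := by
        rw [hE, hEinv, emb_mul hkl,
          show -y * -q + x * p = (1 : R) by linear_combination hxy,
          show -y * x + x * y = (0 : R) by ring,
          show p * -q + q * p = (0 : R) by ring,
          show p * x + q * y = (1 : R) by linear_combination hxy,
          emb_one hkl]
      refine ⟨M' * E, Einv * Minv', ?_, ?_, ?_⟩
      · rw [Matrix.mul_assoc M' E (Einv * Minv'), ← Matrix.mul_assoc E Einv Minv', hEE,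
          Matrix.one_mul, h1]
      · rw [Matrix.mul_assoc Einv Minv' (M' * E), ← Matrix.mul_assoc Minv' M' E, h2,
          Matrix.one_mul, hEE']
      · intro l hl hle
        rw [← Matrix.vecMul_vecMul, ← hw, hE, vecMul_emb hkl]
        rcases eq_or_ne l k with rfl | hlk
        · rw [if_pos rfl]
          linear_combination -q * hp + p * hq
        · rw [if_neg hlk, if_neg hl]
          refine hz l hl ?_
          have : (l : ℕ) ≠ N - (j + 1) := fun hc => hlk (Fin.ext hc)
          omega

end Aux

/-- Over a commutative Bézout domain, a square matrix annihilated on the left by a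
nonzero row vector is similar to a matrix whose last row is zero. -/
theorem exists_conjugate_with_last_row_zero_of_bezout
    (R : Type*) [CommRing R] [IsDomain R] [IsBezout R] (n : ℕ)
    (A : Matrix (Fin (n + 1)) (Fin (n + 1)) R)
    (u : Fin (n + 1) → R) (hu : u ≠ 0) (huA : Matrix.vecMul u A = 0) :
    ∃ P : GL (Fin (n + 1)) R,
      ∀ j, ((P : Matrix (Fin (n + 1)) (Fin (n + 1)) R) * A *
        ((P⁻¹ : GL (Fin (n + 1)) R) : Matrix (Fin (n + 1)) (Fin (n + 1)) R))
          (Fin.last n) j = 0 := by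
  classical
  obtain ⟨M, Minv, hMM, hMM', hz⟩ := bezout_reduce R n n u
  have hz' : ∀ l : Fin (n + 1), l ≠ Fin.last n → Matrix.vecMul u M l = 0 := fun l hl =>
    hz l hl (by omega)
  set w : Fin (n + 1) → R := Matrix.vecMul u M with hw
  set d : R := w (Fin.last n) with hd
  have hu' : Matrix.vecMul w Minv = u := by
    rw [hw, Matrix.vecMul_vecMul, hMM, Matrix.vecMul_one]
  have hdne : d ≠ 0 := by
    intro hd0
    apply hu
    rw [← hu']
    have : w = 0 := by
      funext l
      rcases eq_or_ne l (Fin.last n) with rfl | hl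
      · exact hd0
      · exact hz' l hl
    rw [this, Matrix.zero_vecMul]
  refine ⟨⟨Minv, M, hMM', hMM⟩, fun j => ?_⟩
  have hcoe : ((⟨Minv, M, hMM', hMM⟩ : GL (Fin (n + 1)) R) : Matrix (Fin (n + 1)) (Fin (n + 1)) R)
      = Minv := rfl
  have hcoeinv : (((⟨Minv, M, hMM', hMM⟩ : GL (Fin (n + 1)) R)⁻¹ : GL (Fin (n + 1)) R) :
      Matrix (Fin (n + 1)) (Fin (n + 1)) R) = M := rfl
  rw [hcoe, hcoeinv]
  have hkey : Matrix.vecMul w (Minv * A * M) = 0 := by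
    rw [← Matrix.vecMul_vecMul, ← Matrix.vecMul_vecMul, hu', huA, Matrix.zero_vecMul]
  have hsum : Matrix.vecMul w (Minv * A * M) j = d * (Minv * A * M) (Fin.last n) j := by
    simp only [Matrix.vecMul, dotProduct]
    rw [Fintype.sum_eq_single (Fin.last n) (fun l hl => by rw [hz' l hl, zero_mul])]
  have h0 : Matrix.vecMul w (Minv * A * M) j = 0 := by rw [hkey]; rfl
  have : d * (Minv * A * M) (Fin.last n) j = 0 := by rw [← hsum]; exact h0
  exact (mul_eq_zero.mp this).resolve_left hdne
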